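/- Let (X,Y) be from the true model with true mixing measure Λ* = ((λ*_b),(f*_b)). Let Λ = ((λ_b),(f_b)) and Λ̂ = ((λ̂_b),(f̂_b)) be mixing measures, and suppose that for every b: |λ̂_b − λ_b| ≤ ε and d_TV(f̂_b, f_b) ≤ ε, where d_TV(f,g) = (1/2)∫|f−g| dx. Let ĝ be any measurable classifier with ĝ(x) ∈ argmax_b λ̂_b f̂_b(x) for almost every x, and g* any measurable classifier with g*(x) ∈ argmax_b λ*_b f*_b(x) for almost every x. Then P(ĝ(X) ≠ Y) ≤ P(g*(X) ≠ Y) + (K+2)·ε + Σ_{b=1}^K ( |λ_b − λ*_b| + 2 λ*_b · d_TV(f_b, f*_b) ). -/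

import Mathlib

open MeasureTheory ProbabilityTheory

/-- **Theorem 3 (classification error of the SSL classifier).**
For the true model with true mixing measure `Λ* = ((lamstar b), (fstar b))`, a population
mixing measure `Λ = ((lam b), (f b))` and an estimated mixing measure
`Λ̂ = ((lamhat b), (fhat b))` with `|lamhat b - lam b| ≤ ε` and `d_TV(fhat b, f b) ≤ ε`
for every `b`, any a.e.-argmax classifier `ghat` for `Λ̂` and Bayes classifier `gstar`
for `Λ*` satisfy
`P(ghat(X) ≠ Y) ≤ P(gstar(X) ≠ Y) + (K+2)ε + Σ_b (|lam b - lamstar b| + 2 lamstar b d_TV(f b, fstar b))`. -/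
theorem ssl_classification_error
    {Ω : Type*} [MeasurableSpace Ω] (P : Measure Ω) [IsProbabilityMeasure P]
    (d K : ℕ) (hK : 2 ≤ K)
    -- true weights and class-conditional densities
    (lamstar : Fin K → ℝ) (fstar : Fin K → (Fin d → ℝ) → ℝ)
    (hlamstar_pos : ∀ k, 0 < lamstar k) (hlamstar_sum : ∑ k, lamstar k = 1)
    (hfstar_meas : ∀ k, Measurable (fstar k))
    (hfstar_nonneg : ∀ k x, 0 ≤ fstar k x)
    (hfstar_int : ∀ k, ∫ x, fstar k x = 1)
    -- the random pair (X, Y) from the true model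
    (X : Ω → (Fin d → ℝ)) (Y : Ω → Fin K)
    (hX_meas : Measurable X) (hY_meas : Measurable Y)
    (hY_law : ∀ k, P {ω | Y ω = k} = ENNReal.ofReal (lamstar k))
    (hcond_law : ∀ k, Measure.map X (P[|{ω | Y ω = k}])
      = volume.withDensity (fun x => ENNReal.ofReal (fstar k x)))
    -- the population mixing measure Λ
    (lam : Fin K → ℝ) (f : Fin K → (Fin d → ℝ) → ℝ)
    (hlam_pos : ∀ b, 0 < lam b) (hlam_sum : ∑ b, lam b = 1)
    (hf_meas : ∀ b, Measurable (f b))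
    (hf_nonneg : ∀ b x, 0 ≤ f b x) (hf_int : ∀ b, ∫ x, f b x = 1)
    -- the estimated mixing measure Λ̂
    (lamhat : Fin K → ℝ) (fhat : Fin K → (Fin d → ℝ) → ℝ)
    (hlamhat_pos : ∀ b, 0 < lamhat b) (hlamhat_sum : ∑ b, lamhat b = 1)
    (hfhat_meas : ∀ b, Measurable (fhat b))
    (hfhat_nonneg : ∀ b x, 0 ≤ fhat b x) (hfhat_int : ∀ b, ∫ x, fhat b x = 1)
    -- Λ̂ is ε-close to Λ componentwise
    (ε : ℝ)
    (hlam_close : ∀ b, |lamhat b - lam b| ≤ ε)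
    (hf_close : ∀ b, (1 / 2) * ∫ x, |fhat b x - f b x| ≤ ε)
    -- measurable a.e.-argmax classifiers for Λ̂ and Λ* respectively
    (gstar ghat : (Fin d → ℝ) → Fin K)
    (hgstar_meas : Measurable gstar) (hghat_meas : Measurable ghat)
    (hgstar : ∀ᵐ x ∂(volume : Measure (Fin d → ℝ)),
      ∀ b, lamstar b * fstar b x ≤ lamstar (gstar x) * fstar (gstar x) x)
    (hghat : ∀ᵐ x ∂(volume : Measure (Fin d → ℝ)),
      ∀ b, lamhat b * fhat b x ≤ lamhat (ghat x) * fhat (ghat x) x) :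
    (P {ω | ghat (X ω) ≠ Y ω}).toReal
      ≤ (P {ω | gstar (X ω) ≠ Y ω}).toReal + ((K : ℝ) + 2) * ε
        + ∑ b : Fin K, (|lam b - lamstar b|
            + 2 * lamstar b * ((1 / 2) * ∫ x, |f b x - fstar b x|)) := by
    classical
  have hε : 0 ≤ ε := le_trans (abs_nonneg _) (hlam_close ⟨0, by omega⟩)
  -- integrability of all densities
  have hint : ∀ (h : (Fin d → ℝ) → ℝ), (∫ x, h x) = 1 → Integrable h := by
    intro h hi
    by_contra hc
    rw [integral_undef hc] at hi; norm_num at hi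
  have hintstar : ∀ k, Integrable (fstar k) := fun k => hint _ (hfstar_int k)
  have hintf : ∀ k, Integrable (f k) := fun k => hint _ (hf_int k)
  have hinthat : ∀ k, Integrable (fhat k) := fun k => hint _ (hfhat_int k)
  -- the function S g
  set S : ((Fin d → ℝ) → Fin K) → (Fin d → ℝ) → ℝ :=
    fun g x => lamstar (g x) * fstar (g x) x with hSdef
  have hS_sum : ∀ (g : (Fin d → ℝ) → Fin K) x,
      S g x = ∑ k, (g ⁻¹' {k}).indicator (fun y => lamstar k * fstar k y) x := by
    intro g x
    rw [Finset.sum_eq_single (g x)]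
    · rw [Set.indicator_of_mem (by simp : x ∈ g ⁻¹' {g x})]
    · intro k _ hk
      rw [Set.indicator_of_notMem]
      simp [Set.mem_preimage, Ne.symm hk]
    · simp
  have hS_int : ∀ (g : (Fin d → ℝ) → Fin K), Measurable g → Integrable (S g) := by
    intro g hg
    have : S g = fun x => ∑ k, (g ⁻¹' {k}).indicator (fun y => lamstar k * fstar k y) x :=
      funext (hS_sum g)
    rw [this]
    exact integrable_finset_sum _ fun k _ =>
      (((hintstar k).const_mul (lamstar k)).indicator (hg (measurableSet_singleton k)))
  have hI_eq : ∀ (g : (Fin d → ℝ) → Fin K), Measurable g →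
      ∫ x, S g x = ∑ k, lamstar k * ∫ x in g ⁻¹' {k}, fstar k x := by
    intro g hg
    have : S g = fun x => ∑ k, (g ⁻¹' {k}).indicator (fun y => lamstar k * fstar k y) x :=
      funext (hS_sum g)
    rw [this, integral_finset_sum _ (fun k _ =>
      (((hintstar k).const_mul (lamstar k)).indicator (hg (measurableSet_singleton k))))]
    refine Finset.sum_congr rfl fun k _ => ?_
    rw [integral_indicator (hg (measurableSet_singleton k)), integral_const_mul]
  -- probability identity
  have hPeq : ∀ (g : (Fin d → ℝ) → Fin K), Measurable g →
      P {ω | g (X ω) = Y ω} = ∑ k, ENNReal.ofReal (lamstar k) *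
        ∫⁻ x in g ⁻¹' {k}, ENNReal.ofReal (fstar k x) := by
    intro g hg
    have hset : {ω | g (X ω) = Y ω} = ⋃ k, ({ω | Y ω = k} ∩ X ⁻¹' (g ⁻¹' {k})) := by
      ext ω
      simp only [Set.mem_setOf_eq, Set.mem_iUnion, Set.mem_inter_iff, Set.mem_preimage,
        Set.mem_singleton_iff]
      constructor
      · intro h; exact ⟨Y ω, rfl, h⟩
      · rintro ⟨k, h1, h2⟩; rw [h1, h2]
    have hYk : ∀ k : Fin K, MeasurableSet {ω | Y ω = k} := fun k =>
      hY_meas (measurableSet_singleton k)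
    have hAk : ∀ k : Fin K, MeasurableSet (X ⁻¹' (g ⁻¹' {k})) := fun k =>
      hX_meas (hg (measurableSet_singleton k))
    rw [hset, measure_iUnion, tsum_fintype]
    · refine Finset.sum_congr rfl fun k _ => ?_
      have h0 : P {ω | Y ω = k} ≠ 0 := by
        rw [hY_law k]; simp [ENNReal.ofReal_eq_zero, not_le, hlamstar_pos k]
      have htop : P {ω | Y ω = k} ≠ ⊤ := measure_ne_top _ _
      have hc := cond_apply (μ := P) (hYk k) (X ⁻¹' (g ⁻¹' {k}))
      have : P ({ω | Y ω = k} ∩ X ⁻¹' (g ⁻¹' {k}))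
          = P {ω | Y ω = k} * (P[|{ω | Y ω = k}]) (X ⁻¹' (g ⁻¹' {k})) := by
        rw [hc, ← mul_assoc, ENNReal.mul_inv_cancel h0 htop, one_mul]
      rw [this, hY_law k]
      congr 1
      have := Measure.map_apply (μ := P[|{ω | Y ω = k}]) hX_meas (hg (measurableSet_singleton k))
      rw [← this, hcond_law k, withDensity_apply _ (hg (measurableSet_singleton k))]
    · intro i j hij
      simp only [Function.onFun]
      refine Set.disjoint_left.2 ?_
      rintro ω ⟨h1, -⟩ ⟨h2, -⟩
      exact hij (h1.symm.trans h2)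
    · exact fun k => (hYk k).inter (hAk k)
  -- toReal version
  have hPtoReal : ∀ (g : (Fin d → ℝ) → Fin K), Measurable g →
      (P {ω | g (X ω) = Y ω}).toReal = ∫ x, S g x := by
    intro g hg
    rw [hPeq g hg, hI_eq g hg, ENNReal.toReal_sum]
    · refine Finset.sum_congr rfl fun k _ => ?_
      have hre : ENNReal.ofReal (∫ x in g ⁻¹' {k}, fstar k x)
          = ∫⁻ x in g ⁻¹' {k}, ENNReal.ofReal (fstar k x) := by
        exact ofReal_integral_eq_lintegral_ofReal ((hintstar k).restrict)
          (Filter.Eventually.of_forall fun x => hfstar_nonneg k x)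
      rw [ENNReal.toReal_mul, ENNReal.toReal_ofReal (hlamstar_pos k).le, ← hre,
        ENNReal.toReal_ofReal (integral_nonneg fun x => hfstar_nonneg k x)]
    · intro k _
      refine ENNReal.mul_ne_top ENNReal.ofReal_ne_top ?_
      have : (∫⁻ x in g ⁻¹' {k}, ENNReal.ofReal (fstar k x))
          ≤ ∫⁻ x, ENNReal.ofReal (fstar k x) := setLIntegral_le_lintegral _ _
      refine ne_of_lt (lt_of_le_of_lt this ?_)
      rw [← ofReal_integral_eq_lintegral_ofReal (hintstar k)
        (Filter.Eventually.of_forall fun x => hfstar_nonneg k x)]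
      exact ENNReal.ofReal_lt_top
  have hPne : ∀ (g : (Fin d → ℝ) → Fin K), Measurable g →
      (P {ω | g (X ω) ≠ Y ω}).toReal = 1 - ∫ x, S g x := by
    intro g hg
    have hmeas : MeasurableSet {ω | g (X ω) = Y ω} := by
      exact measurableSet_eq_fun (hg.comp hX_meas) hY_meas
    have hcompl : {ω | g (X ω) ≠ Y ω} = {ω | g (X ω) = Y ω}ᶜ := rfl
    rw [hcompl, prob_compl_eq_one_sub hmeas,
      ENNReal.toReal_sub_of_le prob_le_one ENNReal.one_ne_top, ENNReal.toReal_one,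
      hPtoReal g hg]
  rw [hPne ghat hghat_meas, hPne gstar hgstar_meas]
  -- now the analytic part
  have key : (∫ x, S gstar x) - ∫ x, S ghat x ≤ ((K : ℝ) + 2) * ε
      + ∑ b : Fin K, (|lam b - lamstar b|
          + 2 * lamstar b * ((1 / 2) * ∫ x, |f b x - fstar b x|)) := by
    set D : (Fin d → ℝ) → ℝ :=
      fun x => ∑ b, |lamstar b * fstar b x - lamhat b * fhat b x| with hDdef
    have hδint : ∀ b : Fin K,
        Integrable (fun x => |lamstar b * fstar b x - lamhat b * fhat b x|) :=
      fun b => (((hintstar b).const_mul (lamstar b)).sub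
        ((hinthat b).const_mul (lamhat b))).abs
    have hDint : Integrable D := integrable_finset_sum _ fun b _ => hδint b
    have h1 : (∫ x, S gstar x) - ∫ x, S ghat x ≤ ∫ x, D x := by
      rw [← integral_sub (hS_int gstar hgstar_meas) (hS_int ghat hghat_meas)]
      refine integral_mono_ae ((hS_int gstar hgstar_meas).sub (hS_int ghat hghat_meas))
        hDint ?_
      filter_upwards [hgstar, hghat] with x hs hh
      simp only [hSdef, hDdef]
      by_cases hij : gstar x = ghat x
      · rw [hij]
        simp only [sub_self]
        exact Finset.sum_nonneg fun b _ => abs_nonneg _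
      · have hA : lamstar (gstar x) * fstar (gstar x) x - lamhat (gstar x) * fhat (gstar x) x
            ≤ |lamstar (gstar x) * fstar (gstar x) x - lamhat (gstar x) * fhat (gstar x) x| :=
          le_abs_self _
        have hB : lamhat (ghat x) * fhat (ghat x) x - lamstar (ghat x) * fstar (ghat x) x
            ≤ |lamstar (ghat x) * fstar (ghat x) x - lamhat (ghat x) * fhat (ghat x) x| := by
          rw [abs_sub_comm]; exact le_abs_self _
        have hmid : lamhat (gstar x) * fhat (gstar x) x ≤ lamhat (ghat x) * fhat (ghat x) x :=
          hh (gstar x)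
        have hpair : |lamstar (gstar x) * fstar (gstar x) x - lamhat (gstar x) * fhat (gstar x) x|
            + |lamstar (ghat x) * fstar (ghat x) x - lamhat (ghat x) * fhat (ghat x) x|
            ≤ ∑ b, |lamstar b * fstar b x - lamhat b * fhat b x| := by
          have hsub : (∑ b ∈ ({gstar x, ghat x} : Finset (Fin K)),
              |lamstar b * fstar b x - lamhat b * fhat b x|)
              ≤ ∑ b, |lamstar b * fstar b x - lamhat b * fhat b x| :=
            Finset.sum_le_sum_of_subset_of_nonneg (Finset.subset_univ _)
              (fun b _ _ => abs_nonneg _)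
          rw [Finset.sum_pair hij] at hsub
          exact hsub
        linarith
    refine le_trans h1 ?_
    have h2 : ∫ x, D x = ∑ b, ∫ x, |lamstar b * fstar b x - lamhat b * fhat b x| := by
      rw [hDdef]
      exact integral_finset_sum _ fun b _ => hδint b
    rw [h2]
    have hterm : ∀ b : Fin K, ∫ x, |lamstar b * fstar b x - lamhat b * fhat b x|
        ≤ 2 * lamhat b * ε + ε
          + (|lam b - lamstar b| + 2 * lamstar b * ((1 / 2) * ∫ x, |f b x - fstar b x|)) := by
      intro b
      have hbound : ∀ x, |lamstar b * fstar b x - lamhat b * fhat b x|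
          ≤ lamhat b * |fhat b x - f b x| + |lamhat b - lam b| * f b x
            + |lam b - lamstar b| * f b x + lamstar b * |f b x - fstar b x| := by
        intro x
        have : lamstar b * fstar b x - lamhat b * fhat b x
            = -(lamhat b * (fhat b x - f b x)) - (lamhat b - lam b) * f b x
              - (lam b - lamstar b) * f b x - (lamstar b * (f b x - fstar b x)) := by ring
        rw [this]
        have e1 : |lamhat b * (fhat b x - f b x)| = lamhat b * |fhat b x - f b x| := by
          rw [abs_mul, abs_of_pos (hlamhat_pos b)]
        have e2 : |(lamhat b - lam b) * f b x| = |lamhat b - lam b| * f b x := by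
          rw [abs_mul, abs_of_nonneg (hf_nonneg b x)]
        have e3 : |(lam b - lamstar b) * f b x| = |lam b - lamstar b| * f b x := by
          rw [abs_mul, abs_of_nonneg (hf_nonneg b x)]
        have e4 : |lamstar b * (f b x - fstar b x)| = lamstar b * |f b x - fstar b x| := by
          rw [abs_mul, abs_of_pos (hlamstar_pos b)]
        calc |-(lamhat b * (fhat b x - f b x)) - (lamhat b - lam b) * f b x
              - (lam b - lamstar b) * f b x - lamstar b * (f b x - fstar b x)|
            ≤ |lamhat b * (fhat b x - f b x)| + |(lamhat b - lam b) * f b x|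
              + |(lam b - lamstar b) * f b x| + |lamstar b * (f b x - fstar b x)| := by
              have := abs_sub (-(lamhat b * (fhat b x - f b x)) - (lamhat b - lam b) * f b x
                - (lam b - lamstar b) * f b x) (lamstar b * (f b x - fstar b x))
              have h2 := abs_sub (-(lamhat b * (fhat b x - f b x)) - (lamhat b - lam b) * f b x)
                ((lam b - lamstar b) * f b x)
              have h3 := abs_sub (-(lamhat b * (fhat b x - f b x))) ((lamhat b - lam b) * f b x)
              rw [abs_neg] at h3
              linarith
          _ = lamhat b * |fhat b x - f b x| + |lamhat b - lam b| * f b x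
              + |lam b - lamstar b| * f b x + lamstar b * |f b x - fstar b x| := by
              rw [e1, e2, e3, e4]
      have hi1 : Integrable (fun x => |fhat b x - f b x|) := ((hinthat b).sub (hintf b)).abs
      have hi4 : Integrable (fun x => |f b x - fstar b x|) := ((hintf b).sub (hintstar b)).abs
      have hRHSint : Integrable (fun x => lamhat b * |fhat b x - f b x|
          + |lamhat b - lam b| * f b x + |lam b - lamstar b| * f b x
          + lamstar b * |f b x - fstar b x|) := by
        exact (((hi1.const_mul _).add ((hintf b).const_mul _)).add
          ((hintf b).const_mul _)).add (hi4.const_mul _)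
      have hIle : ∫ x, |lamstar b * fstar b x - lamhat b * fhat b x|
          ≤ ∫ x, (lamhat b * |fhat b x - f b x| + |lamhat b - lam b| * f b x
            + |lam b - lamstar b| * f b x + lamstar b * |f b x - fstar b x|) :=
        integral_mono (hδint b) hRHSint hbound
      have hIeq : ∫ x, (lamhat b * |fhat b x - f b x| + |lamhat b - lam b| * f b x
            + |lam b - lamstar b| * f b x + lamstar b * |f b x - fstar b x|)
          = lamhat b * (∫ x, |fhat b x - f b x|) + |lamhat b - lam b|
            + |lam b - lamstar b| + lamstar b * ∫ x, |f b x - fstar b x| := by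
        have hi12 : Integrable (fun x => lamhat b * |fhat b x - f b x|
            + |lamhat b - lam b| * f b x) := (hi1.const_mul _).add ((hintf b).const_mul _)
        have hi123 : Integrable (fun x => lamhat b * |fhat b x - f b x|
            + |lamhat b - lam b| * f b x + |lam b - lamstar b| * f b x) :=
          hi12.add ((hintf b).const_mul _)
        rw [integral_add hi123 (hi4.const_mul _), integral_add hi12 ((hintf b).const_mul _),
          integral_add (hi1.const_mul _) ((hintf b).const_mul _)]
        simp only [integral_const_mul]
        rw [hf_int b]
        ring
      have h5 : lamhat b * (∫ x, |fhat b x - f b x|) ≤ 2 * lamhat b * ε := by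
        have := hf_close b
        nlinarith [hlamhat_pos b]
      have h6 : lamstar b * ∫ x, |f b x - fstar b x|
          = 2 * lamstar b * ((1 / 2) * ∫ x, |f b x - fstar b x|) := by ring
      have h7 := hlam_close b
      linarith [hIle, hIeq.le, hIeq.ge]
    calc (∑ b, ∫ x, |lamstar b * fstar b x - lamhat b * fhat b x|)
        ≤ ∑ b : Fin K, (2 * lamhat b * ε + ε
            + (|lam b - lamstar b| + 2 * lamstar b * ((1 / 2) * ∫ x, |f b x - fstar b x|))) :=
          Finset.sum_le_sum fun b _ => hterm b
      _ = ((K : ℝ) + 2) * ε + ∑ b : Fin K, (|lam b - lamstar b|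
            + 2 * lamstar b * ((1 / 2) * ∫ x, |f b x - fstar b x|)) := by
          have hsum1 : ∑ b : Fin K, 2 * lamhat b * ε = 2 * ε := by
            rw [← Finset.sum_mul, ← Finset.mul_sum, hlamhat_sum]; ring
          rw [Finset.sum_add_distrib, Finset.sum_add_distrib, hsum1, Finset.sum_const,
            Finset.card_univ, Fintype.card_fin, nsmul_eq_mul]
          ring
  linarith
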